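/- Let T₁ and T₂ be bounded operators on H satisfying B∘T₁∘S = T₁ and B∘T₂∘S = T₂. Then B∘(T₁∘T₂)∘S = T₁∘T₂ + R, where R is the rank-one operator R f = ⟨f, S*(T₂*(e₁))⟩ · (B(T₁(e₁))) (here S*, T₂* denote Hilbert-space adjoints; note ‖e₁‖ = 1). Equivalently, T_{z̄} T_ψ T_φ T_z = T_ψ T_φ + (T_{z̄} T_ψ z) ⊗ (T_z* T_φ* z) for Toeplitz operators on the Dirichlet space. -/

import Mathlib

open scoped ComplexConjugate

local notation "⟪" x ", " y "⟫" => @inner ℂ _ _ x y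

theorem statement10 {H : Type*} [NormedAddCommGroup H] [InnerProductSpace ℂ H]
    [CompleteSpace H]
    (e : ℕ → H)
    (horth : ∀ m n : ℕ, 1 ≤ m → 1 ≤ n → ⟪e m, e n⟫ = if m = n then (m : ℂ) else 0)
    (hdense : Dense (Submodule.span ℂ (e '' {n : ℕ | 1 ≤ n}) : Set H))
    (S B : H →L[ℂ] H)
    (hS : ∀ n : ℕ, 1 ≤ n → S (e n) = e (n + 1))
    (hB1 : B (e 1) = 0)
    (hB : ∀ n : ℕ, 1 ≤ n → B (e (n + 1)) = e n)
    (T₁ T₂ : H →L[ℂ] H)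
    (h1 : B ∘L (T₁ ∘L S) = T₁) (h2 : B ∘L (T₂ ∘L S) = T₂) :
    -- `B (T₁ T₂) S = T₁ T₂ + R` where `R f = ⟨f, S*(T₂* e₁)⟩ · B (T₁ e₁)`
    -- (the paper's inner product `⟨a, b⟩`, linear in the first slot, is `⟪b, a⟫` here).
    ∀ f : H,
      (B ∘L ((T₁ ∘L T₂) ∘L S)) f
        = (T₁ ∘L T₂) f +
          ⟪(ContinuousLinearMap.adjoint S) ((ContinuousLinearMap.adjoint T₂) (e 1)), f⟫ •
            (B (T₁ (e 1))) := by
  -- Key identity: S ∘ B = id - ⟪e1, ·⟫ • e1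
  have key : ∀ x : H, S (B x) = x - ⟪e 1, x⟫ • e 1 := by
    have heq : S ∘L B =
        ContinuousLinearMap.id ℂ H -
          (innerSL ℂ (e 1)).smulRight (e 1) := by
      apply ContinuousLinearMap.ext_on hdense
      rintro _ ⟨n, hn, rfl⟩
      simp only [Set.mem_setOf_eq] at hn
      simp only [ContinuousLinearMap.coe_comp', Function.comp_apply,
        ContinuousLinearMap.sub_apply, ContinuousLinearMap.id_apply,
        ContinuousLinearMap.smulRight_apply, innerSL_apply_apply]
      rcases Nat.exists_eq_add_of_le hn with ⟨k, rfl⟩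
      rcases Nat.eq_zero_or_pos k with rfl | hk
      · rw [hB1, horth 1 1 le_rfl le_rfl]
        simp
      · have : (1 : ℕ) + k = k + 1 := by ring
        rw [this, hB k hk, hS k hk, horth 1 (k + 1) le_rfl (by omega)]
        have : (1 : ℕ) ≠ k + 1 := by omega
        simp [this, hk.ne']
    intro x
    have := congrFun (congrArg (fun T : H →L[ℂ] H => (T : H → H)) heq) x
    simpa using this
  intro f
  have step1 : T₂ (S f) = S (B (T₂ (S f))) + ⟪e 1, T₂ (S f)⟫ • e 1 := by
    rw [key (T₂ (S f))]; abel
  have h1' : ∀ x, B (T₁ (S x)) = T₁ x := fun x =>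
    congrFun (congrArg (fun T : H →L[ℂ] H => (T : H → H)) h1) x
  have h2' : ∀ x, B (T₂ (S x)) = T₂ x := fun x =>
    congrFun (congrArg (fun T : H →L[ℂ] H => (T : H → H)) h2) x
  have hinner : ⟪e 1, T₂ (S f)⟫
      = ⟪(ContinuousLinearMap.adjoint S) ((ContinuousLinearMap.adjoint T₂) (e 1)), f⟫ := by
    rw [ContinuousLinearMap.adjoint_inner_left, ContinuousLinearMap.adjoint_inner_left]
  calc (B ∘L ((T₁ ∘L T₂) ∘L S)) f = B (T₁ (T₂ (S f))) := rfl
    _ = B (T₁ (S (B (T₂ (S f))) + ⟪e 1, T₂ (S f)⟫ • e 1)) := by rw [← step1]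
    _ = B (T₁ (S (B (T₂ (S f))))) + ⟪e 1, T₂ (S f)⟫ • B (T₁ (e 1)) := by
        simp [map_add, map_smul]
    _ = T₁ (T₂ f) + ⟪e 1, T₂ (S f)⟫ • B (T₁ (e 1)) := by rw [h1', h2']
    _ = _ := by rw [hinner]; rfl
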